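/- Let y be a string over an alphabet Σ whose last character occurs exactly once in y. Let L = { x ∈ Substr(y) : x = Lrep_y(x) } and R = { x ∈ Substr(y) : x = Rrep_y(x) }. Let x ∈ Σ* and α ∈ Σ⁺ be such that x ∈ L ∪ R, α·x ∈ L ∪ R, and for every nonempty proper suffix γ of α (1 ≤ |γ| < |α|), γ·x ∉ L ∪ R (i.e., there is a backward edge of the affix tree of y from x to α·x). Let a be the last character of α. Then (x ∈ L and α·x ∉ L) if and only if (x ∈ L, a·x ∈ Substr(y), and a·x ∉ L), i.e., if and only if (x, a, a·x) is an implicit modified Weiner link of the suffix tree of y. -/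

import Mathlib

open List

/-- 1-indexed beginning positions of occurrences of `x` in `y`:
`BegPos y x = { i | 1 ≤ i ≤ |y| - |x| + 1, y[i..i+|x|-1] = x }`. -/
def BegPos {α : Type*} (y x : List α) : Set ℕ :=
  {i | 1 ≤ i ∧ i ≤ y.length - x.length + 1 ∧ x <+: y.drop (i - 1)}

/-- 1-indexed ending positions of occurrences of `x` in `y`:
`EndPos y x = { i | |x| ≤ i ≤ |y|, y[i-|x|+1..i] = x }`. -/
def EndPos {α : Type*} (y x : List α) : Set ℕ :=
  {i | x.length ≤ i ∧ i ≤ y.length ∧ x <:+ y.take i}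

/-- `IsLrepOf y w x` means `w = Lrep_y(x)`: `w` is left-equivalent to `x` in `y`
(`BegPos y w = BegPos y x`) and is the longest such string. -/
def IsLrepOf {α : Type*} (y w x : List α) : Prop :=
  BegPos y w = BegPos y x ∧ ∀ v : List α, BegPos y v = BegPos y x → v.length ≤ w.length

/-- `IsRrepOf y w x` means `w = Rrep_y(x)`: `w` is right-equivalent to `x` in `y`
(`EndPos y w = EndPos y x`) and is the longest such string. -/
def IsRrepOf {α : Type*} (y w x : List α) : Prop :=
  EndPos y w = EndPos y x ∧ ∀ v : List α, EndPos y v = EndPos y x → v.length ≤ w.length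

/-- `x` is a minimal absent word of `y`: `x` is not a substring of `y` and
every proper substring of `x` is a substring of `y`. -/
def IsMAW {α : Type*} (y x : List α) : Prop :=
  ¬ x <:+: y ∧ ∀ w : List α, w <:+: x → w ≠ x → w <:+: y

lemma mem_begPos {α : Type*} {y x : List α} {i : ℕ} :
    i ∈ BegPos y x ↔ 1 ≤ i ∧ i + x.length ≤ y.length + 1 ∧ x <+: y.drop (i - 1) := by
  constructor
  · rintro ⟨h1, h2, h3⟩
    have := h3.length_le
    rw [List.length_drop] at this
    exact ⟨h1, by omega, h3⟩
  · rintro ⟨h1, h2, h3⟩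
    exact ⟨h1, by omega, h3⟩

lemma begPos_anti {α : Type*} {y u w : List α} (h : u <+: w) :
    BegPos y w ⊆ BegPos y u := by
  intro i hi
  rw [mem_begPos] at hi ⊢
  obtain ⟨h1, h2, h3⟩ := hi
  have := h.length_le
  exact ⟨h1, by omega, h.trans h3⟩

lemma infix_exists_begPos {α : Type*} {y x : List α} (h : x <:+: y) :
    ∃ i, i ∈ BegPos y x := by
  obtain ⟨s, t, hst⟩ := h
  refine ⟨s.length + 1, mem_begPos.mpr ⟨by omega, ?_, ?_⟩⟩
  · have : y.length = s.length + x.length + t.length := by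
      rw [← hst]; simp; omega
    omega
  · have : y.drop s.length = x ++ t := by
      rw [← hst]; simpa using (List.drop_left s (x ++ t)).trans rfl
    simp only [Nat.add_sub_cancel, this]
    exact ⟨t, rfl⟩

lemma begPos_ext {α : Type*} {y s : List α} {b : α}
    (h : BegPos y (s ++ [b]) = BegPos y s) (p : List α) :
    BegPos y (p ++ s ++ [b]) = BegPos y (p ++ s) := by
  apply Set.Subset.antisymm
  · exact begPos_anti ⟨[b], by simp⟩
  · intro i hi
    rw [mem_begPos] at hi ⊢
    obtain ⟨h1, h2, t, ht⟩ := hi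
    have hd : y.drop (i + p.length - 1) = s ++ t := by
      have e1 : i + p.length - 1 = (i - 1) + p.length := by omega
      rw [e1, ← List.drop_drop, ← ht]
      rw [List.append_assoc]
      exact List.drop_left (l₁ := p) (l₂ := s ++ t)
    have hps : i + p.length ∈ BegPos y (s ++ [b]) := by
      rw [h, mem_begPos]
      refine ⟨by omega, ?_, ?_⟩
      · simp only [List.length_append] at h2; omega
      · rw [hd]; exact ⟨t, rfl⟩
    rw [mem_begPos] at hps
    obtain ⟨_, hlen, u, hu⟩ := hps
    rw [hd] at hu
    have htu : t = b :: u := by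
      have : s ++ ([b] ++ u) = s ++ t := by rw [← List.append_assoc]; exact hu
      have := List.append_cancel_left this
      simpa using this.symm
    constructor
    · omega
    constructor
    · simp only [List.length_append, List.length_cons] at h2 hlen ⊢
      simp at hlen ⊢
      omega
    · refine ⟨u, ?_⟩
      rw [← ht, htu]
      simp

theorem affix_backward_edge_weiner {α : Type*} [DecidableEq α]
    (y : List α) (hy : y ≠ []) (hlast : y.count (y.getLast hy) = 1)
    (L R : Set (List α))
    (hL : L = {z | z <:+: y ∧ IsLrepOf y z z})
    (hR : R = {z | z <:+: y ∧ IsRrepOf y z z})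
    (x al : List α) (hal : al ≠ [])
    (hx : x ∈ L ∪ R) (halx : al ++ x ∈ L ∪ R)
    (hback : ∀ γ : List α, γ <:+ al → γ ≠ [] → γ ≠ al → γ ++ x ∉ L ∪ R) :
    (x ∈ L ∧ al ++ x ∉ L) ↔
      (x ∈ L ∧ (al.getLast hal :: x) <:+: y ∧ (al.getLast hal :: x) ∉ L) := by
  set a := al.getLast hal with ha
  have hsplit : al.dropLast ++ [a] = al := List.dropLast_append_getLast hal
  have hax : al.dropLast ++ (a :: x) = al ++ x := by
    rw [← hsplit]; simp
  constructor
  · rintro ⟨hxL, hnL⟩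
    refine ⟨hxL, ?_, ?_⟩
    · -- (a :: x) <:+: y
      have hsub : al ++ x <:+: y := by
        rcases halx with h | h
        · exact (hL ▸ h).1
        · exact (hR ▸ h).1
      have hsuf : (a :: x) <:+ (al ++ x) := ⟨al.dropLast, hax⟩
      exact hsuf.isInfix.trans hsub
    · by_cases hone : [a] = al
      · intro hmem
        apply hnL
        rwa [← hone]
      · have := hback [a] ⟨al.dropLast, hsplit⟩ (by simp) hone
        intro hmem
        exact this (Or.inl (by simpa using hmem))
  · rintro ⟨hxL, hinf, hnL⟩
    refine ⟨hxL, fun hmem => ?_⟩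
    rw [hL] at hmem hnL
    obtain ⟨hsub, hrep⟩ := hmem
    have hni : ¬ IsLrepOf y (a :: x) (a :: x) := fun h => hnL ⟨hinf, h⟩
    rw [IsLrepOf] at hni
    push_neg at hni
    obtain ⟨v, hveq, hvlen⟩ := hni rfl
    -- a :: x is a proper prefix of v
    obtain ⟨i, hi⟩ := infix_exists_begPos hinf
    have hiv : i ∈ BegPos y v := by rw [hveq]; exact hi
    have hpref : (a :: x) <+: v :=
      List.prefix_of_prefix_length_le (mem_begPos.mp hi).2.2 (mem_begPos.mp hiv).2.2
        (le_of_lt hvlen)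
    obtain ⟨r, hr⟩ := hpref
    have hrne : r ≠ [] := by
      intro h; rw [h, List.append_nil] at hr; rw [hr] at hvlen; exact lt_irrefl _ hvlen
    set b := r.head hrne with hb
    have hwpref : (a :: x) ++ [b] <+: v := by
      refine ⟨r.tail, ?_⟩
      rw [← hr, List.append_assoc]
      congr 1
      simp [hb, List.cons_head_tail]
    have hkey : BegPos y ((a :: x) ++ [b]) = BegPos y (a :: x) := by
      apply Set.Subset.antisymm
      · exact begPos_anti ⟨[b], rfl⟩
      · rw [← hveq]; exact begPos_anti hwpref
    have hfin := begPos_ext hkey al.dropLast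
    rw [hax] at hfin
    have := hrep.2 _ hfin
    simp at this
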